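/- If x is a vertex of a tree G and C is a connected component of the subgraph of G induced on V \ {x} such that the total probability of the locations of an uncertain point P lying in C is strictly greater than 1/2, then every vertex m minimizing the expected distance D(m) = Σ_j f_j·dist(p_j, m) of P belongs to C. (Lemma 1, part 1: the median of P must lie in a split subtree of x whose probability sum exceeds 0.5.) -/

import Mathlib

open SimpleGraph

/-- In an acyclic graph, two neighbors of `x₀` joined by a walk avoiding `x₀` are equal. -/
lemma tree_nbrs_eq {V : Type*} [DecidableEq V] {G : SimpleGraph V} (hA : G.IsAcyclic)
    {x₀ a b : V} (ha : G.Adj x₀ a) (hb : G.Adj x₀ b)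
    (w : G.Walk a b) (hw : x₀ ∉ w.support) : a = b := by
  by_contra hne
  have hP : x₀ ∉ (w.toPath : G.Walk a b).support :=
    fun h => hw (SimpleGraph.Walk.support_toPath_subset w h)
  have hpath2 : (SimpleGraph.Walk.cons ha.symm (SimpleGraph.Walk.cons hb SimpleGraph.Walk.nil)).IsPath := by
    simp [SimpleGraph.Walk.isPath_def, ha.ne', hb.ne, hne]
  have := (SimpleGraph.isAcyclic_iff_path_unique.mp hA) w.toPath ⟨_, hpath2⟩
  apply hP
  rw [this]
  simp

/-- Splitting off the last edge of a path ending at `x₀`. -/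
lemma path_split {V : Type*} {G : SimpleGraph V} {c x₀ : V} (P : G.Walk c x₀)
    (hP : P.IsPath) (hne : c ≠ x₀) :
    ∃ (y : V) (_ : G.Adj x₀ y) (q : G.Walk y c),
      x₀ ∉ q.support ∧ q.length + 1 = P.length := by
  obtain ⟨y, h, q, hq⟩ := SimpleGraph.Walk.exists_eq_cons_of_ne (Ne.symm hne) P.reverse
  have hrev : P.reverse.IsPath := hP.reverse
  rw [hq, SimpleGraph.Walk.cons_isPath_iff] at hrev
  refine ⟨y, h, q, hrev.2, ?_⟩
  have hlen : P.reverse.length = P.length := SimpleGraph.Walk.length_reverse _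
  rw [hq] at hlen
  simpa using hlen

/-- In a tree, if `y` is a neighbor of `x₀` and `c` is joined to `y` by a walk
avoiding `x₀`, then `dist c x₀ = dist c y + 1`. -/
lemma tree_dist_succ {V : Type*} [DecidableEq V] {G : SimpleGraph V} (hT : G.IsTree)
    {x₀ y c : V} (hy : G.Adj x₀ y) (w : G.Walk c y) (hw : x₀ ∉ w.support) :
    G.dist c x₀ = G.dist c y + 1 := by
  have hconn := hT.isConnected
  have hcx : c ≠ x₀ := fun h => hw (h ▸ w.start_mem_support)
  obtain ⟨w₀, hw₀⟩ := hconn.exists_walk_length_eq_dist c x₀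
  set P : G.Walk c x₀ := w₀.bypass with hPdef
  have hPpath : P.IsPath := w₀.bypass_isPath
  have hPlen : P.length = G.dist c x₀ := by
    have h1 : P.length ≤ w₀.length := SimpleGraph.Walk.length_bypass_le w₀
    have h2 : G.dist c x₀ ≤ P.length := SimpleGraph.dist_le _
    omega
  obtain ⟨y', hy', q, hqsup, hqlen⟩ := path_split P hPpath hcx
  have hyy' : y = y' := by
    refine tree_nbrs_eq hT.IsAcyclic hy hy' (w.reverse.append q.reverse) ?_
    rw [SimpleGraph.Walk.mem_support_append_iff]
    push_neg
    constructor
    · rw [SimpleGraph.Walk.support_reverse]; simpa using hw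
    · rw [SimpleGraph.Walk.support_reverse]; simpa using hqsup
  have hle : G.dist c y + 1 ≤ G.dist c x₀ := by
    have : G.dist c y ≤ q.reverse.length := by
      rw [hyy']; exact SimpleGraph.dist_le _
    rw [SimpleGraph.Walk.length_reverse] at this
    omega
  have hge : G.dist c x₀ ≤ G.dist c y + 1 := by
    have htri := hconn.dist_triangle (u := c) (v := y) (w := x₀)
    have h1 : G.dist y x₀ = 1 := SimpleGraph.dist_eq_one_iff_adj.mpr hy.symm
    omega
  omega

open Classical in
/-- Lemma 1, part 1: if a split subtree `C` of `x` holds probability sum of the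
uncertain point greater than `1/2`, then every median of the uncertain point
lies in `C`. -/
theorem median_in_heavy_split_subtree {V : Type*} [Fintype V] (G : SimpleGraph V)
    (hT : G.IsTree) {m : ℕ} (p : Fin m → V) (f : Fin m → ℝ)
    (hf : ∀ j, 0 ≤ f j) (hsum : ∑ j, f j = 1) (x : V)
    (C : (G.induce {v | v ≠ x}).ConnectedComponent)
    (hheavy : (1 : ℝ) / 2 < ∑ j, if p j ∈ Subtype.val '' C.supp then f j else 0) :
    ∀ x₀ : V, (∀ v : V, ∑ j, f j * (G.dist (p j) x₀ : ℝ) ≤ ∑ j, f j * (G.dist (p j) v : ℝ)) →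
      x₀ ∈ Subtype.val '' C.supp := by
  intro x₀ hmin
  by_contra hx₀
  set S : Set V := Subtype.val '' C.supp with hSdef
  -- some location lies in S
  have hex : ∃ j, p j ∈ S := by
    by_contra hno
    push_neg at hno
    have : (∑ j, if p j ∈ S then f j else 0) = 0 :=
      Finset.sum_eq_zero fun j _ => by simp [hno j]
    rw [this] at hheavy
    norm_num at hheavy
  obtain ⟨j₀, hj₀⟩ := hex
  have hconn := hT.isConnected
  -- walks between members of S staying inside S
  have hwalkS : ∀ c c' : V, c ∈ S → c' ∈ S →
      ∃ w : G.Walk c c', ∀ z ∈ w.support, z ∈ S := by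
    rintro _ _ ⟨u, hu, rfl⟩ ⟨u₀, hu₀, rfl⟩
    have hr : (G.induce {v | v ≠ x}).Reachable u u₀ := by
      apply SimpleGraph.ConnectedComponent.exact
      rw [SimpleGraph.ConnectedComponent.mem_supp_iff] at hu hu₀
      rw [hu, hu₀]
    obtain ⟨w'⟩ := hr
    refine ⟨w'.map (SimpleGraph.Embedding.induce {v | v ≠ x}).toHom, ?_⟩
    intro z hz
    change z ∈ (w'.map (SimpleGraph.Embedding.induce {v | v ≠ x}).toHom).support at hz
    rw [SimpleGraph.Walk.support_map, List.mem_map] at hz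
    obtain ⟨z', hz'sup, rfl⟩ := hz
    refine ⟨z', ?_, rfl⟩
    rw [SimpleGraph.ConnectedComponent.mem_supp_iff]
    have hrz : (G.induce {v | v ≠ x}).Reachable u z' := ⟨w'.takeUntil z' hz'sup⟩
    exact (SimpleGraph.ConnectedComponent.sound hrz.symm).trans
      ((SimpleGraph.ConnectedComponent.mem_supp_iff _ _).mp hu)
  have hc₀x₀ : p j₀ ≠ x₀ := fun h => hx₀ (h ▸ hj₀)
  obtain ⟨w₀⟩ := hconn.preconnected (p j₀) x₀
  obtain ⟨y, hyadj, q₀, hq₀sup, -⟩ := path_split w₀.bypass w₀.bypass_isPath hc₀x₀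
  -- vertices in S are strictly closer to y than to x₀
  have key_in : ∀ c ∈ S, G.dist c x₀ = G.dist c y + 1 := by
    intro c hc
    obtain ⟨w, hwS⟩ := hwalkS c (p j₀) hc hj₀
    apply tree_dist_succ hT hyadj (w.append q₀.reverse)
    rw [SimpleGraph.Walk.mem_support_append_iff]
    push_neg
    refine ⟨fun h => hx₀ (hwS _ h), ?_⟩
    rw [SimpleGraph.Walk.support_reverse]
    simpa using hq₀sup
  have key_out : ∀ c : V, (G.dist c y : ℝ) ≤ G.dist c x₀ + 1 := by
    intro c
    have htri := hconn.dist_triangle (u := c) (v := x₀) (w := y)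
    have h1 : G.dist x₀ y = 1 := SimpleGraph.dist_eq_one_iff_adj.mpr hyadj
    exact_mod_cast (by omega : G.dist c y ≤ G.dist c x₀ + 1)
  have hterm : ∀ j ∈ Finset.univ,
      f j * (G.dist (p j) y : ℝ) + (if p j ∈ S then f j else -f j)
        ≤ f j * (G.dist (p j) x₀ : ℝ) := by
    intro j _
    by_cases h : p j ∈ S
    · rw [if_pos h]
      have h1 : (G.dist (p j) x₀ : ℝ) = G.dist (p j) y + 1 := by
        exact_mod_cast key_in _ h
      rw [h1, mul_add, mul_one]
    · rw [if_neg h]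
      have h2 := key_out (p j)
      nlinarith [hf j]
  have hsum2 := Finset.sum_le_sum hterm
  rw [Finset.sum_add_distrib] at hsum2
  have hsplit : (∑ j, if p j ∈ S then f j else -f j)
      = 2 * (∑ j, if p j ∈ S then f j else 0) - 1 := by
    have hpt : ∀ j, (if p j ∈ S then f j else -f j)
        = 2 * (if p j ∈ S then f j else 0) - f j := by
      intro j; split <;> ring
    simp_rw [hpt]
    rw [Finset.sum_sub_distrib, ← Finset.mul_sum, hsum]
  rw [hsplit] at hsum2
  have hmy := hmin y
  linarith
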